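/- Suppose f : ℝ → ℝ satisfies f(x) ≥ 0 and |f''''(x)| ≤ 1 for all x ∈ ℝ. Then for every x, the negative part of the second derivative is controlled by the function value: -f''(x) ≤ (5/3) f(x)^{1/2}. -/

import Mathlib

open Set

private lemma iterWithin_eq {f : ℝ → ℝ} (hf : ContDiff ℝ 4 f) {s : Set ℝ}
    (hs : UniqueDiffOn ℝ s) {m : ℕ} (hm : (m : ℕ∞) ≤ 4) {x : ℝ} (hx : x ∈ s) :
    iteratedDerivWithin m f s x = iteratedDeriv m f x := by
  have hf' : ContDiff ℝ ((4 : ℕ∞)) f := by exact_mod_cast hf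
  have hp := (contDiff_iff_ftaylorSeries.mp hf').hasFTaylorSeriesUpToOn s
  rw [iteratedDerivWithin_eq_iteratedFDerivWithin, iteratedDeriv_eq_iteratedFDeriv]
  congr 1
  exact (hp.eq_iteratedFDerivWithin_of_uniqueDiffOn (by exact_mod_cast hm) hs hx).symm

private lemma key_ineq (f : ℝ → ℝ) (hf : ContDiff ℝ 4 f)
    (h0 : ∀ x, 0 ≤ f x) (h4 : ∀ x, |iteratedDeriv 4 f x| ≤ 1) (x b : ℝ) (hb : 0 < b) :
    -(iteratedDeriv 2 f x) * b ^ 2 ≤ 2 * f x + b ^ 4 / 3 := by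
  set A : ℝ → ℝ := fun t => f (x + t) with hA_def
  set B : ℝ → ℝ := fun t => f (x - t) with hB_def
  set g : ℝ → ℝ := fun t => f (x + t) + f (x - t) with hg_def
  have hA : ContDiff ℝ 4 A := hf.comp (contDiff_const.add contDiff_id)
  have hB : ContDiff ℝ 4 B := hf.comp (contDiff_const.sub contDiff_id)
  have hg : ContDiff ℝ 4 g := hA.add hB
  have hBA : B = fun t => A (-t) := by
    funext t; simp [hA_def, hB_def, sub_eq_add_neg]
  have hgi : ∀ (n : ℕ), (n : ℕ∞) ≤ 4 → ∀ t : ℝ,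
      iteratedDeriv n g t = iteratedDeriv n f (x + t) + (-1 : ℝ) ^ n * iteratedDeriv n f (x - t) := by
    intro n hn t
    have h1 : iteratedDeriv n A t = iteratedDeriv n f (x + t) := by
      rw [hA_def, iteratedDeriv_comp_const_add]
    have h2 : iteratedDeriv n B t = (-1 : ℝ) ^ n * iteratedDeriv n f (x - t) := by
      rw [hBA, iteratedDeriv_comp_neg, hA_def, iteratedDeriv_comp_const_add]
      simp [smul_eq_mul, sub_eq_add_neg]
    have hadd : iteratedDeriv n (A + B) t = iteratedDeriv n A t + iteratedDeriv n B t := by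
      rw [← iteratedDerivWithin_univ, ← iteratedDerivWithin_univ, ← iteratedDerivWithin_univ]
      exact iteratedDerivWithin_add (Set.mem_univ t) uniqueDiffOn_univ
        (hA.of_le (by exact_mod_cast hn)).contDiffWithinAt (hB.of_le (by exact_mod_cast hn)).contDiffWithinAt
    have hgAB : g = A + B := rfl
    rw [hgAB, hadd, h1, h2]
  have hsIcc : UniqueDiffOn ℝ (Icc (0 : ℝ) b) := uniqueDiffOn_Icc hb
  have hmem0 : (0 : ℝ) ∈ Icc (0 : ℝ) b := ⟨le_rfl, hb.le⟩
  have hmemb : b ∈ Icc (0 : ℝ) b := ⟨hb.le, le_rfl⟩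
  have hcd : ContDiffOn ℝ ((3:ℕ) + 1) g (Icc (0:ℝ) b) := by exact_mod_cast hg.contDiffOn
  have hC : ∀ y ∈ Icc (0:ℝ) b, ‖iteratedDerivWithin 4 g (Icc 0 b) y‖ ≤ 2 := by
    intro y hy
    rw [iterWithin_eq hg hsIcc (by norm_num) hy]
    rw [hgi 4 (by norm_num) y]
    calc ‖iteratedDeriv 4 f (x + y) + (-1 : ℝ) ^ 4 * iteratedDeriv 4 f (x - y)‖
        ≤ ‖iteratedDeriv 4 f (x + y)‖ + ‖(-1 : ℝ) ^ 4 * iteratedDeriv 4 f (x - y)‖ :=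
          norm_add_le _ _
      _ ≤ 1 + 1 := by
          refine add_le_add (h4 _) ?_
          rw [norm_mul]
          simpa using h4 (x - y)
      _ = 2 := by norm_num
  have htaylor := taylor_mean_remainder_bound (n := 3) hb.le hcd hmemb hC
  simp only [Nat.factorial, sub_zero] at htaylor
  norm_num at htaylor
  rw [← iteratedDerivWithin_one, iterWithin_eq hg hsIcc (m := 1) (by norm_num) hmem0,
    iterWithin_eq hg hsIcc (m := 2) (by norm_num) hmem0,
    iterWithin_eq hg hsIcc (m := 3) (by norm_num) hmem0,
    hgi 1 (by norm_num) 0, hgi 2 (by norm_num) 0, hgi 3 (by norm_num) 0] at htaylor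
  have hg0 : g 0 = 2 * f x := by simp [hg_def]; ring
  have hgb0 : 0 ≤ g b := add_nonneg (h0 _) (h0 _)
  rw [hg0] at htaylor
  simp only [add_zero, sub_zero] at htaylor
  norm_num at htaylor
  rw [abs_le] at htaylor
  clear_value g A B
  nlinarith [htaylor.1, htaylor.2, hgb0]

/-- Fefferman–Phong: if `f ≥ 0` and `|f''''| ≤ 1` on `ℝ`, then the negative part of the
second derivative is controlled by the function value: `-f''(x) ≤ (5/3) f(x)^(1/2)`. -/
theorem neg_second_deriv_le (f : ℝ → ℝ) (hf : ContDiff ℝ 4 f)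
    (h0 : ∀ x, 0 ≤ f x) (h4 : ∀ x, |iteratedDeriv 4 f x| ≤ 1) :
    ∀ x : ℝ, -(iteratedDeriv 2 f x) ≤ (5 / 3) * f x ^ ((1 : ℝ) / 2) := by
  intro x
  rcases eq_or_lt_of_le (h0 x) with hfx | hfx
  · -- f x = 0
    rw [← hfx, Real.zero_rpow (by norm_num), mul_zero]
    refine le_of_forall_pos_le_add ?_
    intro ε hε
    have hb : (0 : ℝ) < Real.sqrt (3 * ε) := Real.sqrt_pos.mpr (by linarith)
    have hb2 : Real.sqrt (3 * ε) ^ 2 = 3 * ε := Real.sq_sqrt (by linarith)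
    have := key_ineq f hf h0 h4 x _ hb
    rw [← hfx] at this
    have hb4 : Real.sqrt (3 * ε) ^ 4 = 9 * ε ^ 2 := by
      have : Real.sqrt (3 * ε) ^ 4 = (Real.sqrt (3 * ε) ^ 2) ^ 2 := by ring
      rw [this, hb2]; ring
    rw [hb2, hb4] at this
    nlinarith [this, hε]
  · -- f x > 0
    set s : ℝ := f x ^ ((1 : ℝ) / 2) with hs_def
    have hs : 0 < s := Real.rpow_pos_of_pos hfx _
    have hs2 : s ^ 2 = f x := by
      rw [hs_def, ← Real.rpow_natCast (f x ^ ((1:ℝ)/2)) 2, ← Real.rpow_mul (h0 x)]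
      norm_num
    have hb : (0 : ℝ) < Real.sqrt (2 * s) := Real.sqrt_pos.mpr (by linarith)
    have hb2 : Real.sqrt (2 * s) ^ 2 = 2 * s := Real.sq_sqrt (by linarith)
    have hb4 : Real.sqrt (2 * s) ^ 4 = 4 * s ^ 2 := by
      have h' : Real.sqrt (2 * s) ^ 4 = (Real.sqrt (2 * s) ^ 2) ^ 2 := by ring
      rw [h', hb2]; ring
    have hk := key_ineq f hf h0 h4 x _ hb
    rw [hb2, hb4, ← hs2] at hk
    nlinarith [hk, hs]
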